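/- Let K be an algebraically closed field which is complete with respect to a non-trivial non-archimedean absolute value |·|. Then the closure in ℝ² of the set {(-log|x|, -log|1-x|) : x ∈ K, x ≠ 0, x ≠ 1} is equal to the union of the three half-lines {(t,0) : t ≥ 0} ∪ {(0,t) : t ≥ 0} ∪ {(t,t) : t ≤ 0}. -/

import Mathlib

/-- Let `K` be an algebraically closed field, complete with respect to a
non-trivial non-archimedean absolute value `v`.  Then the closure in `ℝ²` of the
tropicalization `{(-log v x, -log v (1-x)) : x ∈ K, x ≠ 0, x ≠ 1}` of the line `x + y = 1`
is the union of the three half-lines `ℝ≥0·(1,0)`, `ℝ≥0·(0,1)` and `ℝ≤0·(1,1)`. -/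
theorem closure_tropicalization_of_line
    (K : Type*) [Field K] [IsAlgClosed K] [MetricSpace K] [CompleteSpace K]
    (v : AbsoluteValue K ℝ)
    (hna : ∀ a b : K, v (a + b) ≤ max (v a) (v b))
    (hnontriv : ∃ a : K, a ≠ 0 ∧ v a ≠ 1)
    (hdist : ∀ a b : K, dist a b = v (a - b)) :
    closure {p : ℝ × ℝ | ∃ x : K, x ≠ 0 ∧ x ≠ 1 ∧
        p = (-Real.log (v x), -Real.log (v (1 - x)))} =
      {p : ℝ × ℝ | 0 ≤ p.1 ∧ p.2 = 0} ∪
      {p : ℝ × ℝ | p.1 = 0 ∧ 0 ≤ p.2} ∪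
      {p : ℝ × ℝ | p.1 = p.2 ∧ p.1 ≤ 0} := by
  classical
  obtain ⟨a, ha0, ha1⟩ := hnontriv
  have hva : 0 < v a := v.pos ha0
  set ℓ : ℝ := Real.log (v a) with hℓdef
  have hℓ : ℓ ≠ 0 := by
    intro h
    rcases Real.log_eq_zero.mp h with h | h | h
    · exact absurd h (ne_of_gt hva)
    · exact ha1 h
    · linarith
  -- ultrametric facts
  have hlt : ∀ x : K, v x < 1 → v (1 - x) = 1 := by
    intro x hx
    have le1 : v (1 - x) ≤ 1 := by
      have h := hna 1 (-x)
      rw [← sub_eq_add_neg] at h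
      simpa [v.map_one, v.map_neg, max_eq_left hx.le] using h
    have ge1 : 1 ≤ v (1 - x) := by
      have h := hna (1 - x) x
      simp only [sub_add_cancel, v.map_one] at h
      rcases le_max_iff.mp h with h | h
      · exact h
      · linarith
    linarith
  have hgt : ∀ x : K, 1 < v x → v (1 - x) = v x := by
    intro x hx
    have hsub : v (x - 1) = v (1 - x) := by rw [← neg_sub, v.map_neg]
    have le1 : v (1 - x) ≤ v x := by
      have h := hna 1 (-x)
      rw [← sub_eq_add_neg] at h
      simpa [v.map_one, v.map_neg, max_eq_right hx.le] using h
    have ge1 : v x ≤ v (1 - x) := by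
      have h := hna (x - 1) 1
      simp only [sub_add_cancel, v.map_one] at h
      rcases le_max_iff.mp h with h | h
      · rwa [hsub] at h
      · linarith
    linarith
  -- density of the log of the value group
  have dens : ∀ r s : ℝ, r < s →
      ∃ x : K, x ≠ 0 ∧ r < Real.log (v x) ∧ Real.log (v x) < s := by
    intro r s hrs
    have hℓabs : 0 < |ℓ| := abs_pos.mpr hℓ
    obtain ⟨q, hq⟩ := exists_rat_near (((r + s) / 2) / ℓ)
      (show (0:ℝ) < (s - r) / (2 * |ℓ|) from div_pos (by linarith) (by positivity))
    have hql : |(q : ℝ) * ℓ - (r + s) / 2| < (s - r) / 2 := by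
      have h1 : |((r + s) / 2) / ℓ - q| * |ℓ| < (s - r) / (2 * |ℓ|) * |ℓ| :=
        mul_lt_mul_of_pos_right hq hℓabs
      rw [← abs_mul] at h1
      have e1 : (((r + s) / 2) / ℓ - (q:ℝ)) * ℓ = (r + s) / 2 - (q:ℝ) * ℓ := by
        field_simp
      have e2 : (s - r) / (2 * |ℓ|) * |ℓ| = (s - r) / 2 := by
        field_simp
      rw [e1, e2] at h1
      rwa [abs_sub_comm]
    obtain ⟨y, hy⟩ := IsAlgClosed.exists_pow_nat_eq (a ^ (q.num : ℤ)) q.pos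
    have ham : a ^ (q.num : ℤ) ≠ 0 := zpow_ne_zero _ ha0
    have hy0 : y ≠ 0 := by
      intro h
      rw [h, zero_pow q.den_nz] at hy
      exact ham hy.symm
    have hvy : 0 < v y := v.pos hy0
    have hlogy : (q.den : ℝ) * Real.log (v y) = (q.num : ℝ) * ℓ := by
      have h := congrArg (fun t => Real.log (v t)) hy
      simpa [map_pow, map_zpow₀, Real.log_pow, Real.log_zpow] using h
    have hden : (q.den : ℝ) ≠ 0 := Nat.cast_ne_zero.mpr q.den_nz
    have hlogy' : Real.log (v y) = (q : ℝ) * ℓ := by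
      have hcast : (q : ℝ) = (q.num : ℝ) / (q.den : ℝ) := by rw [Rat.cast_def]
      rw [hcast]; field_simp
      linarith [hlogy]
    refine ⟨y, hy0, ?_, ?_⟩
    · rw [hlogy']
      rcases abs_sub_lt_iff.mp hql with ⟨h1, h2⟩
      linarith
    · rw [hlogy']
      rcases abs_sub_lt_iff.mp hql with ⟨h1, h2⟩
      linarith
  apply Set.Subset.antisymm
  · -- forward: set ⊆ tripod
    apply closure_minimal
    · rintro p ⟨x, hx0, hx1, rfl⟩
      have hvx : 0 < v x := v.pos hx0
      rcases lt_trichotomy (v x) 1 with h | h | h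
      · left; left
        refine ⟨?_, ?_⟩
        · simp only
          have : Real.log (v x) ≤ 0 := Real.log_nonpos hvx.le h.le
          linarith
        · simp only [hlt x h, Real.log_one, neg_zero]
      · left; right
        refine ⟨?_, ?_⟩
        · simp only [h, Real.log_one, neg_zero]
        · simp only
          have hle : v (1 - x) ≤ 1 := by
            have hh := hna 1 (-x)
            rw [← sub_eq_add_neg] at hh
            simpa [v.map_one, v.map_neg, h] using hh
          have : Real.log (v (1 - x)) ≤ 0 := Real.log_nonpos (v.nonneg _) hle
          linarith
      · right
        refine ⟨?_, ?_⟩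
        · simp only [hgt x h]
        · simp only
          have : 0 ≤ Real.log (v x) := Real.log_nonneg h.le
          linarith
    · refine IsClosed.union (IsClosed.union ?_ ?_) ?_
      · exact (isClosed_le continuous_const continuous_fst).inter
          (isClosed_eq continuous_snd continuous_const)
      · exact (isClosed_eq continuous_fst continuous_const).inter
          (isClosed_le continuous_const continuous_snd)
      · exact (isClosed_eq continuous_fst continuous_snd).inter
          (isClosed_le continuous_fst continuous_const)
  · -- reverse: tripod ⊆ closure
    intro p hp
    rw [Metric.mem_closure_iff]
    intro ε hε
    rcases hp with (⟨hp1, hp2⟩ | ⟨hp1, hp2⟩) | ⟨hp1, hp2⟩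
    · -- p = (t, 0), t ≥ 0
      obtain ⟨x, hx0, hxl, hxu⟩ := dens (-p.1 - ε) (min (-p.1 + ε) 0)
        (lt_min (by linarith) (by linarith))
      have hlog0 : Real.log (v x) < 0 := lt_of_lt_of_le hxu (min_le_right _ _)
      have hvx1 : v x < 1 := (Real.log_neg_iff (v.pos hx0)).mp hlog0
      have hx1 : x ≠ 1 := by
        intro h; rw [h, v.map_one] at hvx1; exact lt_irrefl _ hvx1
      refine ⟨(-Real.log (v x), -Real.log (v (1 - x))), ⟨x, hx0, hx1, rfl⟩, ?_⟩
      rw [hlt x hvx1, Real.log_one, neg_zero, Prod.dist_eq]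
      have hxu' : Real.log (v x) < -p.1 + ε := lt_of_lt_of_le hxu (min_le_left _ _)
      apply max_lt
      · rw [Real.dist_eq, abs_sub_lt_iff]
        constructor <;> [skip; skip] <;> simp only [sub_neg_eq_add] <;> linarith
      · rw [hp2, Real.dist_eq]
        simpa using hε
    · -- p = (0, t), t ≥ 0
      obtain ⟨y, hy0, hyl, hyu⟩ := dens (-p.2 - ε) (min (-p.2 + ε) 0)
        (lt_min (by linarith) (by linarith))
      have hlog0 : Real.log (v y) < 0 := lt_of_lt_of_le hyu (min_le_right _ _)
      have hvy1 : v y < 1 := (Real.log_neg_iff (v.pos hy0)).mp hlog0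
      set x : K := 1 - y with hxdef
      have hvx : v x = 1 := hlt y hvy1
      have hx0 : x ≠ 0 := by
        intro h; rw [h, v.map_zero] at hvx; linarith
      have hx1 : x ≠ 1 := fun h => hy0 (sub_eq_self.mp h)
      have h1x : (1:K) - x = y := by rw [hxdef]; ring
      refine ⟨(-Real.log (v x), -Real.log (v (1 - x))), ⟨x, hx0, hx1, rfl⟩, ?_⟩
      rw [hvx, Real.log_one, neg_zero, h1x, Prod.dist_eq]
      have hyu' : Real.log (v y) < -p.2 + ε := lt_of_lt_of_le hyu (min_le_left _ _)
      apply max_lt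
      · rw [hp1, Real.dist_eq]
        simpa using hε
      · rw [Real.dist_eq, abs_sub_lt_iff]
        constructor <;> simp only [sub_neg_eq_add] <;> linarith
    · -- p = (t, t), t ≤ 0
      obtain ⟨x, hx0, hxl, hxu⟩ := dens (max (-p.1 - ε) 0) (-p.1 + ε)
        (max_lt (by linarith) (by linarith))
      have hlog0 : 0 < Real.log (v x) := lt_of_le_of_lt (le_max_right _ _) hxl
      have hvx1 : 1 < v x := by
        by_contra h
        push_neg at h
        have := Real.log_nonpos (v.nonneg x) h
        linarith
      have hx1 : x ≠ 1 := by
        intro h; rw [h, v.map_one] at hvx1; exact lt_irrefl _ hvx1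
      have hxl' : -p.1 - ε < Real.log (v x) := lt_of_le_of_lt (le_max_left _ _) hxl
      refine ⟨(-Real.log (v x), -Real.log (v (1 - x))), ⟨x, hx0, hx1, rfl⟩, ?_⟩
      rw [hgt x hvx1, Prod.dist_eq]
      apply max_lt
      · rw [Real.dist_eq, abs_sub_lt_iff]
        constructor <;> simp only [sub_neg_eq_add] <;> linarith
      · rw [← hp1, Real.dist_eq, abs_sub_lt_iff]
        constructor <;> simp only [sub_neg_eq_add] <;> linarith
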